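/- (Scalar case p = 1, k = 2 of the normalizing constant.) For positive reals α₁, α₂, α₃, β₁, β₂ the double integral ∫₀^∞ ∫₀^∞ x₁^{α₁−1} x₂^{α₂−1} (1+x₂)^{β₁} (1+x₁+x₂)^{−(α₁+α₂+α₃+β₁+β₂)} dx₁ dx₂ equals [Γ(α₁)Γ(α₂+α₃+β₁+β₂)/Γ(α₁+α₂+α₃+β₁+β₂)] · [Γ(α₂)Γ(α₃+β₂)/Γ(α₂+α₃+β₂)]. -/

import Mathlib

open MeasureTheory Real Set

lemma beta_real_aux {a b : ℝ} (ha : 0 < a) (hb : 0 < b) :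
    ∫ t in Set.Ioo (0:ℝ) 1, t ^ (a-1) * (1-t) ^ (b-1) = Gamma a * Gamma b / Gamma (a+b) := by
  have hc := Complex.Gamma_mul_Gamma_eq_betaIntegral (s := (a:ℂ)) (t := (b:ℂ))
    (by simpa using ha) (by simpa using hb)
  have hbeta : Complex.betaIntegral a b =
      ((∫ t in Set.Ioo (0:ℝ) 1, t ^ (a-1) * (1-t) ^ (b-1) : ℝ) : ℂ) := by
    rw [Complex.betaIntegral, intervalIntegral.integral_of_le zero_le_one,
      MeasureTheory.integral_Ioc_eq_integral_Ioo]
    rw [show ((∫ t in Set.Ioo (0:ℝ) 1, t ^ (a-1) * (1-t) ^ (b-1) : ℝ) : ℂ) =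
        ∫ t in Set.Ioo (0:ℝ) 1, ((t ^ (a-1) * (1-t) ^ (b-1) : ℝ) : ℂ) from
      (integral_ofReal (𝕜 := ℂ)).symm]
    refine setIntegral_congr_fun measurableSet_Ioo fun t ht => ?_
    have h1 : (0:ℝ) ≤ t := ht.1.le
    have h2 : (0:ℝ) ≤ 1 - t := by linarith [ht.2]
    rw [Complex.ofReal_mul, Complex.ofReal_cpow h1, Complex.ofReal_cpow h2]
    push_cast
    ring
  rw [hbeta] at hc
  have key : ((Gamma a * Gamma b : ℝ) : ℂ) =
      ((Gamma (a+b) * ∫ t in Set.Ioo (0:ℝ) 1, t ^ (a-1) * (1-t) ^ (b-1) : ℝ) : ℂ) := by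
    push_cast
    rw [← Complex.Gamma_ofReal, ← Complex.Gamma_ofReal, ← Complex.Gamma_ofReal]
    push_cast
    exact hc
  have := Complex.ofReal_injective key
  have hG : Gamma (a+b) ≠ 0 := (Gamma_pos_of_pos (by linarith)).ne'
  field_simp
  linarith [this]

lemma beta_type2_aux {a b : ℝ} (ha : 0 < a) (hb : 0 < b) :
    ∫ x in Set.Ioi (0:ℝ), x ^ (a-1) * (1+x) ^ (-(a+b)) = Gamma a * Gamma b / Gamma (a+b) := by
  rw [← beta_real_aux ha hb]
  have himg : (fun t : ℝ => t / (1 - t)) '' Set.Ioo 0 1 = Set.Ioi 0 := by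
    ext y
    simp only [Set.mem_image, Set.mem_Ioo, Set.mem_Ioi]
    constructor
    · rintro ⟨t, ⟨ht0, ht1⟩, rfl⟩
      exact div_pos ht0 (by linarith)
    · intro hy
      refine ⟨y / (1 + y), ⟨div_pos hy (by linarith), by rw [div_lt_one (by linarith)]; linarith⟩, ?_⟩
      have h1y : (1:ℝ) + y ≠ 0 := by positivity
      field_simp; ring
  have hderiv : ∀ t ∈ Set.Ioo (0:ℝ) 1,
      HasDerivWithinAt (fun t : ℝ => t / (1 - t)) (((1-t)^2)⁻¹) (Set.Ioo 0 1) t := by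
    intro t ht
    have h1 : (1:ℝ) - t ≠ 0 := by have := ht.2; intro h; linarith [sub_eq_zero.mp h]
    have h := (hasDerivAt_id t).div ((hasDerivAt_const t (1:ℝ)).sub (hasDerivAt_id t)) h1
    simp only [id_eq, Pi.sub_apply] at h
    have heq : (1 * (1 - t) - t * (0 - 1)) / (1 - t) ^ 2 = ((1-t)^2)⁻¹ := by
      field_simp; ring
    rw [heq] at h
    exact h.hasDerivWithinAt
  have hinj : Set.InjOn (fun t : ℝ => t / (1 - t)) (Set.Ioo 0 1) := by
    intro s hs t ht h
    have hs1 : (1:ℝ) - s ≠ 0 := by have := hs.2; intro hh; linarith [sub_eq_zero.mp hh]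
    have ht1 : (1:ℝ) - t ≠ 0 := by have := ht.2; intro hh; linarith [sub_eq_zero.mp hh]
    field_simp at h
    nlinarith [h]
  rw [← himg, integral_image_eq_integral_abs_deriv_smul measurableSet_Ioo hderiv hinj]
  refine setIntegral_congr_fun measurableSet_Ioo fun t ht => ?_
  have h0t : 0 < t := ht.1
  have h1t : 0 < 1 - t := by linarith [ht.2]
  have e1 : 1 + t/(1-t) = (1-t)⁻¹ := by field_simp; ring
  have habs : |((1-t)^2)⁻¹| = (1-t) ^ (-2:ℝ) := by
    rw [abs_of_pos (by positivity), ← rpow_natCast (1-t) 2, ← rpow_neg h1t.le]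
    norm_num
  have hpow1 : (t/(1-t)) ^ (a-1) = t ^ (a-1) * (1-t) ^ (-(a-1)) := by
    rw [div_rpow h0t.le h1t.le, rpow_neg h1t.le, div_eq_mul_inv]
  have hpow2 : ((1-t)⁻¹) ^ (-(a+b)) = (1-t) ^ (a+b) := by
    rw [← rpow_neg_one, ← rpow_mul h1t.le]
    norm_num
  rw [smul_eq_mul, habs, e1, hpow1, hpow2]
  calc (1-t) ^ (-2:ℝ) * (t ^ (a-1) * (1-t) ^ (-(a-1)) * (1-t) ^ (a+b))
      = t ^ (a-1) * ((1-t) ^ (-2:ℝ) * (1-t) ^ (-(a-1)) * (1-t) ^ (a+b)) := by ring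
    _ = t ^ (a-1) * (1-t) ^ (b-1) := by
        rw [← rpow_add h1t, ← rpow_add h1t]
        congr 1
        ring

lemma beta_type2_scaled {a b c : ℝ} (ha : 0 < a) (hb : 0 < b) (hc : 0 < c) :
    ∫ x in Set.Ioi (0:ℝ), x ^ (a-1) * (c+x) ^ (-(a+b)) =
      c ^ (-b) * (Gamma a * Gamma b / Gamma (a+b)) := by
  have h := integral_comp_mul_left_Ioi (fun x => x ^ (a-1) * (c+x) ^ (-(a+b))) 0 hc
  simp only [mul_zero, smul_eq_mul] at h
  have h2 : ∫ x in Set.Ioi (0:ℝ), (c*x) ^ (a-1) * (c+c*x) ^ (-(a+b))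
      = c ^ (a-1) * c ^ (-(a+b)) * (Gamma a * Gamma b / Gamma (a+b)) := by
    rw [← beta_type2_aux ha hb, ← integral_const_mul]
    refine setIntegral_congr_fun measurableSet_Ioi fun x hx => ?_
    have hx0 : 0 < x := hx
    rw [mul_rpow hc.le hx0.le, show c + c*x = c*(1+x) by ring,
      mul_rpow hc.le (by linarith : (0:ℝ) ≤ 1 + x)]
    ring
  have h3 : ∫ x in Set.Ioi (0:ℝ), x ^ (a-1) * (c+x) ^ (-(a+b))
      = c * (c ^ (a-1) * c ^ (-(a+b)) * (Gamma a * Gamma b / Gamma (a+b))) := by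
    rw [← h2, h, mul_inv_cancel_left₀ hc.ne']
  rw [h3]
  have : c * (c ^ (a-1) * c ^ (-(a+b))) = c ^ (-b) := by
    nth_rewrite 1 [← rpow_one c]
    rw [← rpow_add hc, ← rpow_add hc]
    congr 1
    ring
  rw [← mul_assoc, this]

/-- Scalar (p = 1, k = 2) case of the normalizing constant of the extended
type-2 Dirichlet density. -/
theorem dirichlet_type2_integral_k2 {α₁ α₂ α₃ β₁ β₂ : ℝ}
    (h₁ : 0 < α₁) (h₂ : 0 < α₂) (h₃ : 0 < α₃) (h₄ : 0 < β₁) (h₅ : 0 < β₂) :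
    ∫ x₂ in Set.Ioi (0 : ℝ), ∫ x₁ in Set.Ioi (0 : ℝ),
        x₁ ^ (α₁ - 1) * x₂ ^ (α₂ - 1) * (1 + x₂) ^ β₁ *
          (1 + x₁ + x₂) ^ (-(α₁ + α₂ + α₃ + β₁ + β₂)) =
      (Gamma α₁ * Gamma (α₂ + α₃ + β₁ + β₂) / Gamma (α₁ + α₂ + α₃ + β₁ + β₂)) *
        (Gamma α₂ * Gamma (α₃ + β₂) / Gamma (α₂ + α₃ + β₂)) := by
  set C₁ : ℝ := Gamma α₁ * Gamma (α₂ + α₃ + β₁ + β₂) / Gamma (α₁ + (α₂ + α₃ + β₁ + β₂)) with hC₁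
  have step1 : ∫ x₂ in Set.Ioi (0 : ℝ), ∫ x₁ in Set.Ioi (0 : ℝ),
        x₁ ^ (α₁ - 1) * x₂ ^ (α₂ - 1) * (1 + x₂) ^ β₁ *
          (1 + x₁ + x₂) ^ (-(α₁ + α₂ + α₃ + β₁ + β₂)) =
      ∫ x₂ in Set.Ioi (0 : ℝ),
        C₁ * (x₂ ^ (α₂ - 1) * (1 + x₂) ^ (-(α₂ + (α₃ + β₂)))) := by
    refine setIntegral_congr_fun measurableSet_Ioi fun x₂ hx₂ => ?_
    have hx : 0 < x₂ := hx₂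
    have h1x : 0 < 1 + x₂ := by linarith
    have hfun : (fun x₁ : ℝ => x₁ ^ (α₁ - 1) * x₂ ^ (α₂ - 1) * (1 + x₂) ^ β₁ *
          (1 + x₁ + x₂) ^ (-(α₁ + α₂ + α₃ + β₁ + β₂))) =
        fun x₁ : ℝ => (x₂ ^ (α₂ - 1) * (1 + x₂) ^ β₁) *
          (x₁ ^ (α₁ - 1) * ((1 + x₂) + x₁) ^ (-(α₁ + (α₂ + α₃ + β₁ + β₂)))) := by
      funext x₁
      rw [show (1:ℝ) + x₁ + x₂ = (1 + x₂) + x₁ by ring,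
        show -(α₁ + α₂ + α₃ + β₁ + β₂) = -(α₁ + (α₂ + α₃ + β₁ + β₂)) by ring]
      ring
    rw [hfun, integral_const_mul,
      beta_type2_scaled h₁ (by positivity) h1x]
    have hcomb : (1 + x₂) ^ β₁ * (1 + x₂) ^ (-(α₂ + α₃ + β₁ + β₂)) =
        (1 + x₂) ^ (-(α₂ + (α₃ + β₂))) := by
      rw [← rpow_add h1x]
      congr 1
      ring
    calc x₂ ^ (α₂ - 1) * (1 + x₂) ^ β₁ *
          ((1 + x₂) ^ (-(α₂ + α₃ + β₁ + β₂)) * C₁)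
        = C₁ * (x₂ ^ (α₂ - 1) *
            ((1 + x₂) ^ β₁ * (1 + x₂) ^ (-(α₂ + α₃ + β₁ + β₂)))) := by ring
      _ = C₁ * (x₂ ^ (α₂ - 1) * (1 + x₂) ^ (-(α₂ + (α₃ + β₂)))) := by rw [hcomb]
  rw [step1, integral_const_mul, beta_type2_aux h₂ (by positivity)]
  rw [hC₁, show α₁ + (α₂ + α₃ + β₁ + β₂) = α₁ + α₂ + α₃ + β₁ + β₂ by ring,
    show α₂ + (α₃ + β₂) = α₂ + α₃ + β₂ by ring]
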